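/- Let F be a CNF with incidence graph of pathwidth k−1, σ a forget ordering, and π a prefix of σ; let v be the last variable of π and B the first bag containing v (in a witnessing path decomposition). Let C'' be the set of var(π)-active clauses occurring only in bags strictly after B. Then every variable of ⋃_{c ∈ C''} var(c) ∩ var(π) belongs to B. -/

import Mathlib

abbrev Var := ℕ
abbrev Lit := Var × Bool
abbrev Clause := Finset Lit
abbrev CNF := Finset Clause

def varsClause (c : Clause) : Finset Var := c.image Prod.fst
def varsCNF (F : CNF) : Finset Var := F.sup varsClause
def sizeCNF (F : CNF) : ℕ := ∑ c ∈ F, c.card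

def satClauseOn (X : Finset Var) (f : Var → Bool) (c : Clause) : Prop :=
  ∃ l ∈ c, l.1 ∈ X ∧ f l.1 = l.2

instance (X : Finset Var) (f : Var → Bool) : DecidablePred (satClauseOn X f) := fun c => by
  unfold satClauseOn; infer_instance

def restrict (F : CNF) (X : Finset Var) (f : Var → Bool) : CNF :=
  (F.filter (fun c => ¬ satClauseOn X f c)).image (fun c => c.filter (fun l => l.1 ∉ X))

def st (F : CNF) (X : Finset Var) : Set CNF := { G | ∃ f : Var → Bool, G = restrict F X f }

noncomputable def stw (F : CNF) (σ : List Var) : ℕ :=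
  (Finset.Icc 1 σ.length).sup fun i => (st F ((σ.take i).toFinset)).ncard

def satCNF (F : CNF) (f : Var → Bool) : Prop := ∀ c ∈ F, ∃ l ∈ c, f l.1 = l.2

structure OBDD (σ : List Var) where
  size : ℕ
  label : Fin size → (Fin σ.length) ⊕ Bool
  succ : Fin size → Bool → Fin size
  source : Fin size
  ordered : ∀ v i, label v = Sum.inl i → ∀ b j, label (succ v b) = Sum.inl j → i < j

def OBDD.evalAux {σ : List Var} (D : OBDD σ) (f : Var → Bool) : ℕ → Fin D.size → Bool
  | 0, v => match D.label v with | .inr b => b | .inl _ => false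
  | n+1, v => match D.label v with
    | .inr b => b
    | .inl i => D.evalAux f n (D.succ v (f (σ.get i)))

def OBDD.eval {σ : List Var} (D : OBDD σ) (f : Var → Bool) : Bool :=
  D.evalAux f (σ.length + 1) D.source

def OBDD.computes {σ : List Var} (D : OBDD σ) (F : CNF) : Prop :=
  ∀ f : Var → Bool, D.eval f = true ↔ satCNF F f

/-- Vertices of the incidence graph of a CNF: variables and clauses. -/
abbrev IVertex := Var ⊕ Clause

/-- P is a path decomposition of the incidence graph of F. -/
def IsPathDecomp (F : CNF) (P : List (Finset IVertex)) : Prop :=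
  (∀ x ∈ varsCNF F, ∃ B ∈ P, Sum.inl x ∈ B) ∧
  (∀ c ∈ F, ∃ B ∈ P, Sum.inr c ∈ B) ∧
  (∀ c ∈ F, ∀ x ∈ varsClause c, ∃ B ∈ P, Sum.inl x ∈ B ∧ Sum.inr c ∈ B) ∧
  (∀ u : IVertex, ∀ i j k : ℕ, i ≤ j → j ≤ k →
    ∀ (hi : i < P.length) (hj : j < P.length) (hk : k < P.length),
      u ∈ P.get ⟨i, hi⟩ → u ∈ P.get ⟨k, hk⟩ → u ∈ P.get ⟨j, hj⟩)

/-- Index of the first bag of P containing the vertex u. -/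
def firstIdx (P : List (Finset IVertex)) (u : IVertex) : ℕ :=
  P.findIdx (fun B => decide (u ∈ B))

/-- σ is a forget ordering of var(F) with respect to the path decomposition P:
variables are ordered by the position of the first bag containing them. -/
def IsForgetOrdering (F : CNF) (P : List (Finset IVertex)) (σ : List Var) : Prop :=
  σ.Nodup ∧ σ.toFinset = varsCNF F ∧
    ∀ x ∈ varsCNF F, ∀ y ∈ varsCNF F,
      firstIdx P (Sum.inl x) < firstIdx P (Sum.inl y) → σ.idxOf x < σ.idxOf y


/-- with v the last variable of prefix π and B the first bag containing v,
every var(π)-variable of a var(π)-active clause occurring only in bags strictly after B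
belongs to B. -/
theorem late_active_clause_vars_in_bag (F : CNF) (k : ℕ) (P : List (Finset IVertex))
    (σ : List Var) (hP : IsPathDecomp F P) (hw : ∀ B ∈ P, B.card ≤ k)
    (hσ : IsForgetOrdering F P σ)
    (i : ℕ) (hi : i < σ.length)
    (hfi : firstIdx P (Sum.inl (σ.get ⟨i, hi⟩)) < P.length)
    (c : Clause) (hc : c ∈ F)
    (hact : (varsClause c ∩ (σ.take (i+1)).toFinset).Nonempty ∧
            (varsClause c \ (σ.take (i+1)).toFinset).Nonempty)
    (hlate : ∀ j (hj : j < P.length), Sum.inr c ∈ P.get ⟨j, hj⟩ →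
      firstIdx P (Sum.inl (σ.get ⟨i, hi⟩)) < j) :
    ∀ x ∈ varsClause c, x ∈ (σ.take (i+1)).toFinset →
      Sum.inl x ∈ P.get ⟨firstIdx P (Sum.inl (σ.get ⟨i, hi⟩)), hfi⟩ := by
  intro x hxc hxπ
  obtain ⟨hnd, hσF, hord⟩ := hσ
  set v := σ.get ⟨i, hi⟩ with hv
  -- x and v are variables of F
  have hxF : x ∈ varsCNF F := by
    exact Finset.mem_sup.mpr ⟨c, hc, hxc⟩
  have hvF : v ∈ varsCNF F := by
    rw [← hσF]; exact List.mem_toFinset.mpr (σ.get_mem ⟨i, hi⟩)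
  -- indexOf x ≤ i = indexOf v
  have hxtake : x ∈ σ.take (i+1) := List.mem_toFinset.mp hxπ
  obtain ⟨j, hjm, hjx⟩ := List.mem_take_iff_getElem.mp hxtake
  have hidx : σ.idxOf x ≤ i := by
    have : σ.idxOf x ≤ j := by
      subst hjx
      exact le_of_eq (List.get_idxOf hnd ⟨j, lt_of_lt_of_le hjm (min_le_right _ _)⟩)
    omega
  have hiv : σ.idxOf v = i := List.get_idxOf hnd ⟨i, hi⟩
  -- firstIdx x ≤ firstIdx v
  have hfx_le : firstIdx P (Sum.inl x) ≤ firstIdx P (Sum.inl v) := by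
    by_contra h
    have := hord v hvF x hxF (by omega)
    omega
  -- x appears in its first bag
  have hex : ∃ B ∈ P, (Sum.inl x : IVertex) ∈ B := hP.1 x hxF
  have hfxlt : firstIdx P (Sum.inl x) < P.length := by
    apply List.findIdx_lt_length_of_exists
    obtain ⟨B, hBP, hBx⟩ := hex
    exact ⟨B, hBP, by simpa using hBx⟩
  have hxfirst : (Sum.inl x : IVertex) ∈ P.get ⟨firstIdx P (Sum.inl x), hfxlt⟩ := by
    have := List.findIdx_getElem (w := hfxlt)
    exact of_decide_eq_true this
  -- there is a bag containing both x and c, with index > firstIdx v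
  obtain ⟨B, hBP, hBx, hBc⟩ := hP.2.2.1 c hc x hxc
  obtain ⟨⟨m, hm⟩, hBm⟩ := List.mem_iff_get.mp hBP
  have hmgt : firstIdx P (Sum.inl v) < m := hlate m hm (by rw [hBm]; exact hBc)
  -- convexity
  exact hP.2.2.2 (Sum.inl x) (firstIdx P (Sum.inl x)) (firstIdx P (Sum.inl v)) m
    hfx_le (le_of_lt hmgt) hfxlt hfi hm hxfirst (by rw [hBm]; exact hBx)
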